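/- arXiv:1107.5282 — 2 statements merged into one kernel-verified Lean document; each statement's English description precedes it below -/
import Mathlib

section
/- Let m, n, c be positive integers with gcd(m,c) ≠ gcd(n,c). Then T(m,n;c) = 0. -/
open ArithmeticFunction

/-- Ramanujan's sum `c_q(n) = ∑_{d ∣ (q,n)} μ(q/d) d`. -/
def ramanujanSum (q n : ℕ) : ℤ :=
  ∑ d ∈ (Nat.gcd q n).divisors, (moebius (q / d) : ℤ) * (d : ℤ)

/-- `T(m,n;c) = ∑_{u ∣ c} φ(u)⁻¹ c_u(m) c_u(n)`. -/
noncomputable def Tsum (m n c : ℕ) : ℝ :=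
  ∑ u ∈ c.divisors, ((Nat.totient u : ℝ))⁻¹ * (ramanujanSum u m : ℝ) * (ramanujanSum u n : ℝ)

open scoped ArithmeticFunction.Moebius ArithmeticFunction.zeta

/-- `d ↦ d` if `d ∣ m`, else `0`, as an arithmetic function. -/
def divIndicator (m : ℕ) : ArithmeticFunction ℤ :=
  ⟨fun d => if d ∣ m then (d : ℤ) else 0, by simp⟩

lemma divIndicator_apply (m d : ℕ) : divIndicator m d = if d ∣ m then (d : ℤ) else 0 := rfl

lemma divIndicator_isMultiplicative (m : ℕ) : IsMultiplicative (divIndicator m) := by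
  constructor
  · simp [divIndicator_apply]
  · intro x y hxy
    simp only [divIndicator_apply]
    by_cases hx : x ∣ m
    · by_cases hy : y ∣ m
      · rw [if_pos (Nat.Coprime.mul_dvd_of_dvd_of_dvd hxy hx hy), if_pos hx, if_pos hy]
        push_cast; ring
      · rw [if_neg (fun hd => hy (dvd_trans (dvd_mul_left y x) hd)), if_neg hy, mul_zero]
    · rw [if_neg (fun hd => hx (dvd_trans (dvd_mul_right x y) hd)), if_neg hx, zero_mul]

lemma ramanujanSum_eq_mul_apply (m u : ℕ) :
    ramanujanSum u m = ((μ : ArithmeticFunction ℤ) * divIndicator m) u := by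
  rcases Nat.eq_zero_or_pos u with rfl | hu
  · simp [ramanujanSum, ArithmeticFunction.map_zero]
  rw [ArithmeticFunction.mul_apply,
    Nat.sum_divisorsAntidiagonal' (f := fun x y => (μ x : ℤ) * divIndicator m y)]
  have h1 : ramanujanSum u m
      = ∑ d ∈ (Nat.gcd u m).divisors, (μ (u / d) : ℤ) * divIndicator m d := by
    rw [ramanujanSum]
    apply Finset.sum_congr rfl
    intro d hd
    have hdm : d ∣ m := dvd_trans (Nat.mem_divisors.mp hd).1 (Nat.gcd_dvd_right u m)
    rw [divIndicator_apply, if_pos hdm]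
  rw [h1]
  apply Finset.sum_subset
  · exact Nat.divisors_subset_of_dvd hu.ne' (Nat.gcd_dvd_left u m)
  · intro d hd hnd
    have hdm : ¬ d ∣ m := by
      intro hdm
      apply hnd
      rw [Nat.mem_divisors] at hd ⊢
      exact ⟨Nat.dvd_gcd hd.1 hdm, Nat.gcd_ne_zero_left hu.ne'⟩
    rw [divIndicator_apply, if_neg hdm, mul_zero]

lemma ramanujanSum_isMultiplicative (m : ℕ) :
    ∀ {x y : ℕ}, Nat.Coprime x y →
      ramanujanSum (x * y) m = ramanujanSum x m * ramanujanSum y m := by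
  intro x y hxy
  rw [ramanujanSum_eq_mul_apply, ramanujanSum_eq_mul_apply, ramanujanSum_eq_mul_apply]
  exact (isMultiplicative_moebius.mul (divIndicator_isMultiplicative m)).2 hxy

lemma ramanujanSum_one (m : ℕ) : ramanujanSum 1 m = 1 := by
  simp [ramanujanSum]

/-- Value of the Ramanujan sum at prime powers. -/
lemma ramanujanSum_prime_pow {p : ℕ} (hp : p.Prime) (m : ℕ) (hm : m ≠ 0) (j : ℕ) :
    ramanujanSum (p ^ j) m =
      if j ≤ m.factorization p then ((p ^ j).totient : ℤ)
      else if j = m.factorization p + 1 then -((p : ℤ) ^ m.factorization p) else 0 := by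
  set v := m.factorization p with hv
  have hppos : (0:ℕ) < p := hp.pos
  have hg : Nat.gcd (p ^ j) m = p ^ (min j v) := by
    obtain ⟨i, hij, hi⟩ := (Nat.dvd_prime_pow hp).mp (Nat.gcd_dvd_left (p ^ j) m)
    have h1 : (Nat.gcd (p ^ j) m).factorization p = min j v := by
      rw [Nat.factorization_gcd (pow_ne_zero j hp.ne_zero) hm, Finsupp.inf_apply,
        Nat.Prime.factorization_pow hp, Finsupp.single_eq_same]
    rw [hi] at h1 ⊢
    rw [Nat.Prime.factorization_pow hp, Finsupp.single_eq_same] at h1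
    rw [h1]
  have hdiv : ∀ x : ℕ, x ≤ j → p ^ j / p ^ x = p ^ (j - x) :=
    fun x hx => Nat.pow_div hx hppos
  rw [ramanujanSum, hg, Nat.divisors_prime_pow hp, Finset.sum_map]
  simp only [Function.Embedding.coeFn_mk]
  have hmuz : ∀ k : ℕ, 2 ≤ k → (μ (p ^ k) : ℤ) = 0 := by
    intro k hk
    rw [moebius_apply_prime_pow hp (by omega), if_neg (by omega)]
  rcases le_or_gt j v with hjv | hvj
  · rw [min_eq_left hjv, if_pos hjv]
    rcases Nat.eq_zero_or_pos j with rfl | hj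
    · simp
    obtain ⟨k, rfl⟩ := Nat.exists_eq_succ_of_ne_zero hj.ne'
    rw [Finset.sum_range_succ, Finset.sum_range_succ]
    have h0 : ∀ x ∈ Finset.range k, (μ (p ^ (k + 1) / p ^ x) : ℤ) * (p ^ x : ℕ) = 0 := by
      intro x hx
      rw [Finset.mem_range] at hx
      rw [hdiv x (by omega), hmuz _ (by omega), zero_mul]
    rw [Finset.sum_eq_zero h0, hdiv k (by omega), hdiv (k+1) (by omega)]
    have e1 : k + 1 - k = 1 := by omega
    have e2 : k + 1 - (k + 1) = 0 := by omega
    rw [e1, e2, moebius_apply_prime_pow hp one_ne_zero, if_pos rfl, pow_zero,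
      ArithmeticFunction.moebius_apply_one,
      Nat.totient_prime_pow hp (by omega : 0 < k + 1)]
    have e3 : k + 1 - 1 = k := by omega
    rw [e3]
    push_cast [Nat.cast_sub hp.one_le]
    ring
  · rw [min_eq_right hvj.le, if_neg (by omega)]
    rcases eq_or_ne j (v + 1) with hj1 | hj1
    · rw [if_pos hj1, Finset.sum_range_succ]
      have h0 : ∀ x ∈ Finset.range v, (μ (p ^ j / p ^ x) : ℤ) * (p ^ x : ℕ) = 0 := by
        intro x hx
        rw [Finset.mem_range] at hx
        rw [hdiv x (by omega), hmuz _ (by omega), zero_mul]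
      rw [Finset.sum_eq_zero h0, hdiv v (by omega)]
      have e1 : j - v = 1 := by omega
      rw [e1, moebius_apply_prime_pow hp one_ne_zero, if_pos rfl]
      push_cast
      ring
    · rw [if_neg hj1]
      apply Finset.sum_eq_zero
      intro x hx
      rw [Finset.mem_range] at hx
      rw [hdiv x (by omega), hmuz _ (by omega), zero_mul]

/-- The summand of `Tsum`, as an arithmetic function of `u`. -/
noncomputable def gfun (m n : ℕ) : ArithmeticFunction ℝ :=
  ⟨fun u => ((Nat.totient u : ℝ))⁻¹ * (ramanujanSum u m : ℝ) * (ramanujanSum u n : ℝ),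
    by simp⟩

lemma gfun_apply (m n u : ℕ) :
    gfun m n u = ((Nat.totient u : ℝ))⁻¹ * (ramanujanSum u m : ℝ) * (ramanujanSum u n : ℝ) := rfl

lemma gfun_isMultiplicative (m n : ℕ) : IsMultiplicative (gfun m n) := by
  constructor
  · simp [gfun_apply, ramanujanSum_one]
  · intro x y hxy
    simp only [gfun_apply]
    rw [ramanujanSum_isMultiplicative m hxy, ramanujanSum_isMultiplicative n hxy,
      Nat.totient_mul hxy]
    push_cast
    rw [mul_inv]
    ring

lemma Tsum_eq (m n c : ℕ) : Tsum m n c = ((gfun m n) * ↑(ζ : ArithmeticFunction ℕ)) c := by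
  rw [ArithmeticFunction.coe_mul_zeta_apply, Tsum]
  rfl

lemma sum_totient_prime_pow_range {p : ℕ} (hp : p.Prime) (a : ℕ) :
    ∑ j ∈ Finset.range (a + 1), ((p ^ j).totient : ℝ) = (p : ℝ) ^ a := by
  have h := Nat.sum_totient (p ^ a)
  rw [Nat.divisors_prime_pow hp, Finset.sum_map] at h
  simp only [Function.Embedding.coeFn_mk] at h
  exact_mod_cast congrArg (Nat.cast : ℕ → ℝ) h

lemma sum_gfun_prime_pow_eq_zero {p : ℕ} (hp : p.Prime) {m n e : ℕ} (hm : m ≠ 0) (hn : n ≠ 0)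
    (hab : min (m.factorization p) e < min (n.factorization p) e) :
    ∑ u ∈ (p ^ e).divisors, gfun m n u = 0 := by
  set vm := m.factorization p with hvm
  set vn := n.factorization p with hvn
  set a := min vm e with ha
  set b := min vn e with hb
  have hae : a < e := lt_of_lt_of_le hab (min_le_right _ _)
  have havm : vm = a := by
    rcases le_or_gt vm e with h1 | h1
    · rw [ha, min_eq_left h1]
    · exfalso; rw [ha, min_eq_right h1.le] at hae; omega
  have hbvn : b ≤ vn := min_le_left _ _
  have hbe : b ≤ e := min_le_right _ _
  rw [Nat.divisors_prime_pow hp, Finset.sum_map]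
  simp only [Function.Embedding.coeFn_mk]
  have hterm : ∀ j, j ≤ e → gfun m n (p ^ j) =
      (if j ≤ a then ((p ^ j).totient : ℝ) else if j = a + 1 then -((p:ℝ) ^ a) else 0) := by
    intro j hj
    have htpos : (0:ℝ) < ((p ^ j).totient : ℝ) := by
      exact_mod_cast Nat.totient_pos.mpr (pow_pos hp.pos j)
    rw [gfun_apply, ramanujanSum_prime_pow hp m hm j, ramanujanSum_prime_pow hp n hn j,
      ← hvm, ← hvn]
    rcases le_or_gt j a with hja | hja
    · rw [if_pos (havm ▸ hja), if_pos (le_trans (le_trans hja (le_of_lt hab)) hbvn),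
        if_pos hja]
      push_cast
      field_simp
    · rw [if_neg (by omega : ¬ j ≤ vm), if_neg (by omega : ¬ j ≤ a)]
      rcases eq_or_ne j (a + 1) with hj1 | hj1
      · rw [if_pos (by omega : j = vm + 1), if_pos hj1,
          if_pos (by omega : j ≤ vn), havm]
        push_cast
        field_simp
      · rw [if_neg (by omega : j ≠ vm + 1), if_neg hj1]
        ring
  rw [Finset.sum_congr rfl (fun j hj => hterm j (by
    rw [Finset.mem_range] at hj; omega))]
  have hsub : Finset.range (a + 2) ⊆ Finset.range (e + 1) := by
    apply Finset.range_subset_range.mpr; omega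
  rw [← Finset.sum_subset hsub (fun j _ hj => by
    rw [Finset.mem_range] at hj
    rw [if_neg (by omega : ¬ j ≤ a), if_neg (by omega : j ≠ a + 1)])]
  rw [Finset.sum_range_succ, if_neg (by omega : ¬ a + 1 ≤ a), if_pos rfl]
  have hsum1 : (∑ j ∈ Finset.range (a + 1),
      if j ≤ a then ((p ^ j).totient : ℝ) else if j = a + 1 then -((p:ℝ) ^ a) else 0)
      = ∑ j ∈ Finset.range (a + 1), ((p ^ j).totient : ℝ) := by
    apply Finset.sum_congr rfl
    intro j hj
    rw [Finset.mem_range] at hj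
    rw [if_pos (by omega : j ≤ a)]
  rw [hsum1, sum_totient_prime_pow_range hp a]
  ring

lemma sum_gfun_prime_pow_eq_zero' {p : ℕ} (hp : p.Prime) {m n e : ℕ} (hm : m ≠ 0) (hn : n ≠ 0)
    (hab : min (m.factorization p) e ≠ min (n.factorization p) e) :
    ∑ u ∈ (p ^ e).divisors, gfun m n u = 0 := by
  rcases lt_or_gt_of_ne hab with h | h
  · exact sum_gfun_prime_pow_eq_zero hp hm hn h
  · have hswap : ∀ u, gfun m n u = gfun n m u := by
      intro u; rw [gfun_apply, gfun_apply]; ring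
    rw [Finset.sum_congr rfl (fun u _ => hswap u)]
    exact sum_gfun_prime_pow_eq_zero hp hn hm h

theorem Tsum_eq_zero_of_gcd_ne
    (m n c : ℕ) (hm : 0 < m) (hn : 0 < n) (hc : 0 < c)
    (h : Nat.gcd m c ≠ Nat.gcd n c) :
    Tsum m n c = 0 := by
  -- find a prime where the gcd factorizations differ
  have hfac : (Nat.gcd m c).factorization ≠ (Nat.gcd n c).factorization := by
    intro H
    exact h (Nat.factorization_inj (Nat.gcd_ne_zero_left hm.ne')
      (Nat.gcd_ne_zero_left hn.ne') H)
  obtain ⟨p, hp⟩ := Finsupp.ne_iff.mp hfac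
  rw [Nat.factorization_gcd hm.ne' hc.ne', Nat.factorization_gcd hn.ne' hc.ne',
    Finsupp.inf_apply, Finsupp.inf_apply] at hp
  have hpp : p.Prime := by
    by_contra hnp
    rw [Nat.factorization_eq_zero_of_not_prime m hnp,
      Nat.factorization_eq_zero_of_not_prime n hnp] at hp
    exact hp rfl
  set e := c.factorization p with he
  -- split c = p^e * t
  have hsplit : p ^ e * (c / p ^ e) = c := Nat.ordProj_mul_ordCompl_eq_self c p
  have hcop : Nat.Coprime (p ^ e) (c / p ^ e) :=
    Nat.Coprime.pow_left e (Nat.coprime_ordCompl hpp hc.ne')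
  have hmin : min (m.factorization p) e ≠ min (n.factorization p) e := by
    simpa [min_comm] using hp
  have hmult := (gfun_isMultiplicative m n).mul
    (isMultiplicative_zeta.natCast (R := ℝ))
  rw [Tsum_eq, ← hsplit, hmult.2 hcop]
  have hz : ((gfun m n) * ↑(ζ : ArithmeticFunction ℕ)) (p ^ e) = 0 := by
    rw [ArithmeticFunction.coe_mul_zeta_apply]
    exact sum_gfun_prime_pow_eq_zero' hpp hm.ne' hn.ne' hmin
  rw [hz, zero_mul]
end

section
/- Let γ = (a b; c d) ∈ SL₂(ℤ) with a·c even and b·d even (i.e. γ lies in the theta group Λ). Then for every η ∈ ℝ and every z ∈ ℍ: θ(η,0,γ(z))·θ(0,0,z) = e(a·b·η²/8)·θ(0,0,γ(z))·∑_{n ∈ ℤ} e((n + a·η/2)²·z/2)·e(n·b·η/2), where γ(z) = (az+b)/(cz+d) and all series converge absolutely. -/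
open Complex

/-- `e(w) = exp(2πiw)`. -/
noncomputable def eC (w : ℂ) : ℂ := Complex.exp (2 * Real.pi * Complex.I * w)

/-- `θ(η,η',z) = ∑_{n ∈ ℤ} e((1/2)(n+η/2)² z) e((n+η/2) η'/2)`. -/
noncomputable def theta2 (η η' : ℝ) (z : ℂ) : ℂ :=
  ∑' n : ℤ, eC (((n : ℂ) + (η : ℂ) / 2) ^ 2 * z / 2) *
    eC (((n : ℂ) + (η : ℂ) / 2) * (η' : ℂ) / 2)

open Real

lemma denom_ne (c d : ℤ) (hcd : c ≠ 0 ∨ d ≠ 0) {z : ℂ} (hz : 0 < z.im) :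
    (c : ℂ) * z + d ≠ 0 := by
  rcases eq_or_ne c 0 with hc | hc
  · subst hc
    simp only [Int.cast_zero, zero_mul, zero_add, ne_eq, Int.cast_eq_zero]
    tauto
  · intro h
    have := congrArg Complex.im h
    simp [Complex.add_im, Complex.mul_im] at this
    rcases this with h1 | h1
    · exact hc (by exact_mod_cast h1)
    · exact hz.ne' h1

lemma im_moebius {a b c d : ℤ} (hdet : a * d - b * c = 1) {z : ℂ} (hz : 0 < z.im) :
    0 < ((((a : ℂ)) * z + b) / (((c : ℂ)) * z + d)).im := by
  have hne : (c : ℂ) * z + d ≠ 0 := by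
    apply denom_ne c d ?_ hz
    rcases eq_or_ne c 0 with hc | hc
    · right; intro hd; rw [hc, hd] at hdet; omega
    · left; exact hc
  have hns : 0 < Complex.normSq ((c : ℂ) * z + d) := by
    rwa [Complex.normSq_pos]
  have key : ((((a : ℂ)) * z + b) / (((c : ℂ)) * z + d)).im
      = z.im / Complex.normSq ((c : ℂ) * z + d) := by
    rw [Complex.div_im]
    simp only [Complex.add_im, Complex.add_re, Complex.mul_im, Complex.mul_re,
      Complex.intCast_im, Complex.intCast_re]
    have hd : (a : ℝ) * d - b * c = 1 := by exact_mod_cast hdet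
    field_simp
    ring_nf
    nlinarith [hd]
  rw [key]
  positivity

lemma jt_periodic (x : ℂ) (k : ℤ) (τ : ℂ) :
    jacobiTheta₂ x (τ + 2 * k) = jacobiTheta₂ x τ := by
  have hp : Function.Periodic (jacobiTheta₂ x) 2 := fun τ => jacobiTheta₂_add_right x τ
  have := (hp.int_mul k) τ
  rw [mul_comm (2:ℂ) (k:ℂ)]
  exact_mod_cast this

/-- the transformation property, ratio form. -/
def EQT (a b c d : ℤ) (w z : ℂ) : Prop :=
  Complex.exp (-(Real.pi : ℂ) * Complex.I * c * w ^ 2 / ((c : ℂ) * z + d)) *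
      jacobiTheta₂ (w / ((c : ℂ) * z + d)) (((a : ℂ) * z + b) / ((c : ℂ) * z + d)) *
      jacobiTheta₂ 0 z
    = jacobiTheta₂ 0 (((a : ℂ) * z + b) / ((c : ℂ) * z + d)) * jacobiTheta₂ w z

lemma Tstep (a b c d k : ℤ) {z : ℂ} (h : (c : ℂ) * z + d ≠ 0) (w : ℂ) :
    EQT (a + 2 * k * c) (b + 2 * k * d) c d w z ↔ EQT a b c d w z := by
  unfold EQT
  have key : (((a + 2 * k * c : ℤ) : ℂ) * z + ((b + 2 * k * d : ℤ) : ℂ)) / ((c : ℂ) * z + d)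
      = ((a : ℂ) * z + b) / ((c : ℂ) * z + d) + 2 * (k : ℂ) := by
    rw [div_add' _ _ _ h]
    push_cast
    ring
  rw [key]
  have p1 := jt_periodic (w / ((c : ℂ) * z + d)) k (((a : ℂ) * z + b) / ((c : ℂ) * z + d))
  have p2 := jt_periodic 0 k (((a : ℂ) * z + b) / ((c : ℂ) * z + d))
  rw [p1, p2]

lemma base_pos (b : ℤ) (hb : Even b) (w z : ℂ) : EQT 1 b 0 1 w z := by
  obtain ⟨m, hm⟩ := hb
  unfold EQT
  subst hm
  push_cast
  simp only [zero_mul, zero_add, mul_zero, zero_div, Complex.exp_zero, one_mul, div_one,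
    mul_one, one_mul]
  rw [show z + ((m : ℂ) + m) = z + 2 * ((m : ℤ) : ℂ) by push_cast; ring,
    jt_periodic, jt_periodic]
  exact mul_comm _ _

lemma base_neg (b : ℤ) (hb : Even b) (w z : ℂ) : EQT (-1) b 0 (-1) w z := by
  obtain ⟨m, hm⟩ := hb
  unfold EQT
  subst hm
  push_cast
  simp only [zero_mul, zero_add, mul_zero, zero_div, Complex.exp_zero, one_mul]
  rw [show (-1 : ℂ) * z + ((m : ℂ) + m) = -(z + 2 * ((-m : ℤ) : ℂ)) by push_cast; ring,
    show w / (-1 : ℂ) = -w by ring, neg_div_neg_eq, div_one, jacobiTheta₂_neg_left,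
    jt_periodic, jt_periodic]
  exact mul_comm _ _
lemma Sstep (a b c d : ℤ) (hdet : a * d - b * c = 1) {z : ℂ} (hz : 0 < z.im) (w : ℂ)
    (h : EQT (-c) (-d) a b w z) : EQT a b c d w z := by
  have hdetC : (a : ℂ) * d - b * c = 1 := by exact_mod_cast hdet
  have hj : (c : ℂ) * z + d ≠ 0 := by
    refine denom_ne c d ?_ hz
    rcases eq_or_ne c 0 with hc | hc
    · right; intro hd; rw [hc, hd] at hdet; omega
    · left; exact hc
  have hu : (a : ℂ) * z + b ≠ 0 := by
    refine denom_ne a b ?_ hz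
    rcases eq_or_ne a 0 with ha | ha
    · right; intro hb'; rw [ha, hb'] at hdet; omega
    · left; exact ha
  set j : ℂ := (c : ℂ) * z + d with hjdef
  set u : ℂ := (a : ℂ) * z + b with hudef
  set τ : ℂ := u / j with hτdef
  have hτ : τ ≠ 0 := div_ne_zero hu hj
  have hminus : (((-c : ℤ) : ℂ) * z + ((-d : ℤ) : ℂ)) / ((a : ℂ) * z + b) = -1 / τ := by
    push_cast
    rw [hτdef, hudef, hjdef]
    field_simp
    ring
  have h1 : jacobiTheta₂ (w / j) τ
      = 1 / (-I * τ) ^ (1 / 2 : ℂ) * Complex.exp (-(π : ℂ) * I * (w / j) ^ 2 / τ) *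
        jacobiTheta₂ (w / u) (-1 / τ) := by
    have := jacobiTheta₂_functional_equation (w / j) τ
    rw [show w / j / τ = w / u by rw [hτdef]; field_simp] at this
    exact this
  have h2 : jacobiTheta₂ 0 τ = 1 / (-I * τ) ^ (1 / 2 : ℂ) * jacobiTheta₂ 0 (-1 / τ) := by
    have := jacobiTheta₂_functional_equation 0 τ
    simpa using this
  unfold EQT at h ⊢
  rw [hminus] at h
  rw [h1, h2]
  have hexp : Complex.exp (-(π : ℂ) * I * c * w ^ 2 / j) *
      Complex.exp (-(π : ℂ) * I * (w / j) ^ 2 / τ)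
      = Complex.exp (-(π : ℂ) * I * (a : ℂ) * w ^ 2 / ((a : ℂ) * z + b)) := by
    rw [← Complex.exp_add]
    congr 1
    have hq : -(π : ℂ) * I * (w / j) ^ 2 / τ = -(π : ℂ) * I * (w ^ 2 / (j * u)) := by
      rw [mul_div_assoc, hτdef]
      congr 1
      field_simp
    rw [hq]
    rw [hudef, hjdef]
    rw [div_mul_eq_div_div]
    linear_combination (π : ℂ) * I * w ^ 2 *
      (((c:ℂ) * z + d)⁻¹ * ((a:ℂ) * z + b)⁻¹ * hdetC
        - (a:ℂ) * ((a:ℂ) * z + b)⁻¹ * mul_inv_cancel₀ (hj : (c:ℂ) * z + d ≠ 0)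
        + (c:ℂ) * ((c:ℂ) * z + d)⁻¹ * mul_inv_cancel₀ (hu : (a:ℂ) * z + b ≠ 0))
  linear_combination (1 / (-I * τ) ^ (1 / 2 : ℂ)) * h +
    (1 / (-I * τ) ^ (1 / 2 : ℂ)) * (jacobiTheta₂ (w / u) (-1 / τ) * jacobiTheta₂ 0 z) * hexp

lemma exists_k (a c : ℤ) (hc : c ≠ 0) (hor : Even a ∨ Even c) (hne : ¬(Even a ∧ Even c)) :
    ∃ k : ℤ, (a + 2 * k * c).natAbs < c.natAbs := by
  obtain ⟨C, hCdef⟩ : ∃ C : ℤ, C = (c.natAbs : ℤ) := ⟨_, rfl⟩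
  have hC : 0 < C := by rw [hCdef]; exact_mod_cast Int.natAbs_pos.mpr hc
  obtain ⟨q, r, hqr, hr0, hr1⟩ :
      ∃ q r : ℤ, a = (2 * C) * q + r ∧ 0 ≤ r ∧ r < 2 * C := by
    refine ⟨a / (2 * C), a % (2 * C), (Int.mul_ediv_add_emod a (2 * C)).symm, ?_, ?_⟩
    · exact Int.emod_nonneg a (by omega)
    · exact Int.emod_lt_of_pos a (by omega)
  have hr2 : r % 2 = a % 2 := by
    have hd : (2 : ℤ) ∣ (a - r) := ⟨C * q, by rw [hqr]; ring⟩
    omega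
  have hpar : a % 2 = 0 ∨ c % 2 = 0 := by
    rcases hor with h | h
    · left; exact Int.even_iff.mp h
    · right; exact Int.even_iff.mp h
  have hpar2 : ¬(a % 2 = 0 ∧ c % 2 = 0) := by
    intro ⟨h1, h2⟩
    exact hne ⟨Int.even_iff.mpr h1, Int.even_iff.mpr h2⟩
  have hcC : c = C ∨ c = -C := by
    rw [hCdef]; rcases Int.natAbs_eq c with h | h
    · left; exact h
    · right; exact h
  rcases hcC with hcC | hcC
  · have key : ∀ s : ℤ, a + 2 * (-q + s) * c = r + s * (2 * C) := by
      intro s; rw [hqr, hcC]; ring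
    rcases lt_or_ge r C with h | h
    · exact ⟨-q + 0, by rw [key 0]; omega⟩
    · exact ⟨-q + -1, by rw [key (-1)]; omega⟩
  · have key : ∀ s : ℤ, a + 2 * (q + s) * c = r + (-s) * (2 * C) := by
      intro s; rw [hqr, hcC]; ring
    rcases lt_or_ge r C with h | h
    · exact ⟨q + 0, by rw [key 0]; omega⟩
    · exact ⟨q + 1, by rw [key 1]; omega⟩

lemma base0 (a b d : ℤ) (hdet : a * d - b * 0 = 1) (hbd : Even (b * d)) (w z : ℂ) :
    EQT a b 0 d w z := by
  have had : a * d = 1 := by omega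
  rcases Int.mul_eq_one_iff_eq_one_or_neg_one.mp had with ⟨ha, hd⟩ | ⟨ha, hd⟩
  · subst ha; subst hd
    exact base_pos b (by simpa using hbd) w z
  · subst ha; subst hd
    refine base_neg b ?_ w z
    have : Even (-(b * -1)) := hbd.neg
    simpa using this

lemma main_ind : ∀ N : ℕ, ∀ a b c d : ℤ, c.natAbs ≤ N → a * d - b * c = 1 →
    Even (a * c) → Even (b * d) → ∀ w z : ℂ, 0 < z.im → EQT a b c d w z := by
  intro N
  induction N with
  | zero =>
    intro a b c d hcN hdet hac hbd w z hz
    have hc0 : c = 0 := by omega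
    subst hc0
    exact base0 a b d hdet hbd w z
  | succ N ih =>
    intro a b c d hcN hdet hac hbd w z hz
    rcases eq_or_ne c 0 with hc0 | hc0
    · subst hc0
      exact base0 a b d hdet hbd w z
    · -- parity facts
      have hor : Even a ∨ Even c := Int.even_mul.mp hac
      have hne2 : ¬(Even a ∧ Even c) := by
        rintro ⟨⟨a2, ha2⟩, ⟨c2, hc2⟩⟩
        have : Even (a * d - b * c) := by
          refine Even.sub ?_ ?_
          · exact ⟨a2 * d, by rw [ha2]; ring⟩
          · exact ⟨b * c2, by rw [hc2]; ring⟩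
        rw [hdet] at this
        have := Int.even_iff.mp this; omega
      obtain ⟨k, hk⟩ := exists_k a c hc0 hor hne2
      have hdet' : (-c) * (b + 2 * k * d) - (-d) * (a + 2 * k * c) = 1 := by
        linear_combination hdet
      obtain ⟨t, ht⟩ := hac
      obtain ⟨s, hs⟩ := hbd
      have hac' : Even ((-c) * (a + 2 * k * c)) :=
        ⟨-t - k * c ^ 2, by linear_combination -ht⟩
      have hbd' : Even ((-d) * (b + 2 * k * d)) :=
        ⟨-s - k * d ^ 2, by linear_combination -hs⟩
      have hEQ' : EQT (-c) (-d) (a + 2 * k * c) (b + 2 * k * d) w z :=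
        ih (-c) (-d) (a + 2 * k * c) (b + 2 * k * d) (by omega) hdet' hac' hbd' w z hz
      have hdetδ : (a + 2 * k * c) * d - (b + 2 * k * d) * c = 1 := by
        linear_combination hdet
      have hEQδ : EQT (a + 2 * k * c) (b + 2 * k * d) c d w z :=
        Sstep _ _ _ _ hdetδ hz w hEQ'
      have hcd : (c : ℂ) * z + d ≠ 0 := by
        refine denom_ne c d (Or.inl hc0) hz
      exact (Tstep a b c d k hcd w).mp hEQδ

lemma main_EQT (a b c d : ℤ) (hdet : a * d - b * c = 1)
    (hac : Even (a * c)) (hbd : Even (b * d)) (w z : ℂ) (hz : 0 < z.im) :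
    EQT a b c d w z :=
  main_ind c.natAbs a b c d le_rfl hdet hac hbd w z hz

lemma bridge1 (η : ℝ) (τ : ℂ) :
    theta2 η 0 τ = Complex.exp ((π : ℂ) * I * (η : ℂ) ^ 2 * τ / 4) *
      jacobiTheta₂ ((η : ℂ) * τ / 2) τ := by
  rw [jacobiTheta₂, ← tsum_mul_left]
  refine tsum_congr fun n => ?_
  unfold eC jacobiTheta₂_term
  rw [← Complex.exp_add, ← Complex.exp_add]
  push_cast
  congr 1
  ring

lemma bridge2 (z : ℂ) : theta2 0 0 z = jacobiTheta₂ 0 z := by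
  rw [jacobiTheta₂]
  refine tsum_congr fun n => ?_
  unfold eC jacobiTheta₂_term
  rw [← Complex.exp_add]
  push_cast
  congr 1
  ring

lemma bridge3 (a b : ℤ) (η : ℝ) (z : ℂ) :
    (∑' n : ℤ, eC (((n : ℂ) + (a : ℂ) * (η : ℂ) / 2) ^ 2 * z / 2) *
      eC ((n : ℂ) * (b : ℂ) * (η : ℂ) / 2))
    = Complex.exp ((π : ℂ) * I * (a : ℂ) ^ 2 * (η : ℂ) ^ 2 * z / 4) *
      jacobiTheta₂ (((a : ℂ) * (η : ℂ) * z + (b : ℂ) * (η : ℂ)) / 2) z := by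
  rw [jacobiTheta₂, ← tsum_mul_left]
  refine tsum_congr fun n => ?_
  unfold eC jacobiTheta₂_term
  rw [← Complex.exp_add, ← Complex.exp_add]
  push_cast
  congr 1
  ring

lemma summ_core (ξ : ℝ) {τ : ℂ} (hτ : 0 < τ.im) :
    Summable fun n : ℤ => ‖eC (((n : ℂ) + (ξ : ℂ)) ^ 2 * τ / 2)‖ := by
  have hkey : ∀ n : ℤ, ‖eC (((n : ℂ) + (ξ : ℂ)) ^ 2 * τ / 2)‖
      = ‖jacobiTheta₂_term n ((ξ : ℂ) * τ) τ‖ * ‖Complex.exp ((π : ℂ) * I * (ξ : ℂ) ^ 2 * τ)‖ := by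
    intro n
    rw [← norm_mul]
    congr 1
    unfold eC jacobiTheta₂_term
    rw [← Complex.exp_add]
    congr 1
    push_cast
    ring
  have hsum : Summable fun n : ℤ => ‖jacobiTheta₂_term n ((ξ : ℂ) * τ) τ‖ := by
    refine Summable.of_nonneg_of_le (fun n => norm_nonneg _)
      (fun n => norm_jacobiTheta₂_term_le hτ le_rfl le_rfl n) ?_
    simpa using summable_pow_mul_jacobiTheta₂_term_bound |((ξ : ℂ) * τ).im| hτ 0
  have := hsum.mul_right ‖Complex.exp ((π : ℂ) * I * (ξ : ℂ) ^ 2 * τ)‖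
  refine this.congr fun n => (hkey n).symm

theorem theta_transformation_theta_group
    (a b c d : ℤ) (hdet : a * d - b * c = 1)
    (hac : Even (a * c)) (hbd : Even (b * d))
    (η : ℝ) (z : ℂ) (hz : 0 < z.im) :
    (Summable fun n : ℤ => ‖eC (((n : ℂ) + (η : ℂ) / 2) ^ 2 *
        (((a : ℂ) * z + (b : ℂ)) / ((c : ℂ) * z + (d : ℂ))) / 2)‖) ∧
      (Summable fun n : ℤ => ‖eC ((n : ℂ) ^ 2 * z / 2)‖) ∧
      (Summable fun n : ℤ => ‖eC ((n : ℂ) ^ 2 *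
        (((a : ℂ) * z + (b : ℂ)) / ((c : ℂ) * z + (d : ℂ))) / 2)‖) ∧
      (Summable fun n : ℤ => ‖eC (((n : ℂ) + (a : ℂ) * (η : ℂ) / 2) ^ 2 * z / 2) *
        eC ((n : ℂ) * (b : ℂ) * (η : ℂ) / 2)‖) ∧
      theta2 η 0 (((a : ℂ) * z + (b : ℂ)) / ((c : ℂ) * z + (d : ℂ))) * theta2 0 0 z =
        eC ((a : ℂ) * (b : ℂ) * (η : ℂ) ^ 2 / 8) *
          theta2 0 0 (((a : ℂ) * z + (b : ℂ)) / ((c : ℂ) * z + (d : ℂ))) *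
          ∑' n : ℤ, eC (((n : ℂ) + (a : ℂ) * (η : ℂ) / 2) ^ 2 * z / 2) *
            eC ((n : ℂ) * (b : ℂ) * (η : ℂ) / 2) := by
  have hdetC : (a : ℂ) * d - b * c = 1 := by exact_mod_cast hdet
  have hτ : 0 < ((((a : ℂ)) * z + b) / (((c : ℂ)) * z + d)).im := im_moebius hdet hz
  have hj : (c : ℂ) * z + d ≠ 0 := by
    refine denom_ne c d ?_ hz
    rcases eq_or_ne c 0 with hc | hc
    · right; intro hd; rw [hc, hd] at hdet; omega
    · left; exact hc
  refine ⟨?_, ?_, ?_, ?_, ?_⟩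
  · have := summ_core (η / 2) hτ
    refine this.congr fun n => ?_
    congr 2
    push_cast
    ring
  · have := summ_core 0 hz
    refine this.congr fun n => ?_
    congr 2
    push_cast
    ring
  · have := summ_core 0 hτ
    refine this.congr fun n => ?_
    congr 2
    push_cast
    ring
  · have h1 : ∀ n : ℤ, ‖eC ((n : ℂ) * (b : ℂ) * (η : ℂ) / 2)‖ = 1 := by
      intro n
      unfold eC
      rw [show 2 * (Real.pi : ℂ) * I * ((n : ℂ) * (b : ℂ) * (η : ℂ) / 2)
          = ((Real.pi * (n * b * η) : ℝ) : ℂ) * I by push_cast; ring]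
      rw [Complex.norm_exp]
      simp
    have := summ_core (a * η / 2) hz
    refine this.congr fun n => ?_
    rw [norm_mul, h1, mul_one]
    congr 2
    push_cast
    ring
  · set τ : ℂ := ((a : ℂ) * z + b) / ((c : ℂ) * z + d) with hτdef
    set w : ℂ := ((a : ℂ) * z + (b : ℂ)) * (η : ℂ) / 2 with hwdef
    have hM := main_EQT a b c d hdet hac hbd w z hz
    unfold EQT at hM
    rw [← hτdef] at hM
    rw [bridge1, bridge2, bridge2, bridge3]
    have harg1 : (η : ℂ) * τ / 2 = w / ((c : ℂ) * z + d) := by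
      rw [hτdef, hwdef]
      field_simp
    have harg2 : ((a : ℂ) * (η : ℂ) * z + (b : ℂ) * (η : ℂ)) / 2 = w := by
      rw [hwdef]; ring
    rw [harg1, harg2]
    have hE : Complex.exp ((π : ℂ) * I * (η : ℂ) ^ 2 * τ / 4)
        = eC ((a : ℂ) * (b : ℂ) * (η : ℂ) ^ 2 / 8) *
          Complex.exp ((π : ℂ) * I * (a : ℂ) ^ 2 * (η : ℂ) ^ 2 * z / 4) *
          Complex.exp (-(π : ℂ) * I * c * w ^ 2 / ((c : ℂ) * z + d)) := by
      unfold eC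
      rw [← Complex.exp_add, ← Complex.exp_add]
      congr 1
      rw [hτdef, hwdef]
      linear_combination (π : ℂ) * I * (η : ℂ) ^ 2 / 4 * ((a:ℂ) * z + b) *
        ((a:ℂ) * mul_inv_cancel₀ hj - ((c:ℂ) * z + d)⁻¹ * hdetC)
    linear_combination (eC ((a : ℂ) * (b : ℂ) * (η : ℂ) ^ 2 / 8) *
        Complex.exp ((π : ℂ) * I * (a : ℂ) ^ 2 * (η : ℂ) ^ 2 * z / 4)) * hM +
      (jacobiTheta₂ (w / ((c : ℂ) * z + d)) τ * jacobiTheta₂ 0 z) * hE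
end
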